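/- Let (X,d) be a metric space, φ a comparison function, and T : X → X satisfy d(Tx,Ty) ≤ φ(d(x,y)) for all x, y ∈ X. Then every orbit 𝒪(x) = {Tⁿx : n ≥ 0} is bounded; in particular, T is a weak φ-quasicontraction. -/

import Mathlib

open Metric Set Function Filter Topology

def IsComparisonFn (φ : ℝ → ℝ) : Prop :=
  MonotoneOn φ (Set.Ici 0) ∧ UpperSemicontinuousOn φ (Set.Ici 0) ∧
    (∀ t, 0 ≤ t → 0 ≤ φ t) ∧ φ 0 = 0 ∧ ∀ t, 0 < t → φ t < t

def orbitOf {X : Type*} (T : X → X) (x : X) : Set X :=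
  Set.range fun n : ℕ => T^[n] x

def dorbitOf {X : Type*} (T : X → X) (x y : X) : Set X :=
  orbitOf T x ∪ orbitOf T y

def IsWeakQuasicontraction {X : Type*} [MetricSpace X] (φ : ℝ → ℝ) (T : X → X) : Prop :=
  (∀ x : X, Bornology.IsBounded (orbitOf T x)) ∧
    ∀ x y : X, dist (T x) (T y) ≤ φ (Metric.diam (dorbitOf T x y))

def IsStrongQuasicontraction {X : Type*} [MetricSpace X] (φ : ℝ → ℝ) (T : X → X) : Prop :=
  ∀ x y : X, dist (T x) (T y) ≤ φ (Metric.diam {x, y, T x, T y})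

theorem nonlinear_contraction_orbit_bounded {X : Type*} [MetricSpace X]
    (φ : ℝ → ℝ) (T : X → X) (hφ : IsComparisonFn φ)
    (hT : ∀ x y : X, dist (T x) (T y) ≤ φ (dist x y)) :
    (∀ x : X, Bornology.IsBounded (orbitOf T x)) ∧ IsWeakQuasicontraction φ T := by
  obtain ⟨hmono, husc, hnonneg, hzero, hlt⟩ := hφ
  have hle : ∀ t, 0 ≤ t → φ t ≤ t := by
    intro t ht
    rcases ht.eq_or_lt with h | h
    · rw [← h, hzero]
    · exact (hlt t h).le
  have key : ∀ x : X, Bornology.IsBounded (orbitOf T x) := by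
    intro x
    set u : ℕ → X := fun n => T^[n] x with hu
    have hstep : ∀ n, u (n + 1) = T (u n) := fun n => Function.iterate_succ_apply' T n x
    set c : ℕ → ℝ := fun n => dist (u n) (u (n + 1)) with hc
    have hc0 : ∀ n, 0 ≤ c n := fun n => dist_nonneg
    have hcs : ∀ n, c (n + 1) ≤ φ (c n) := by
      intro n
      have : c (n + 1) = dist (T (u n)) (T (u (n + 1))) := by
        simp only [hc, hstep]
      rw [this]
      exact hT _ _
    have hanti : Antitone c :=
      antitone_nat_of_succ_le fun n => (hcs n).trans (hle _ (hc0 n))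
    have hbd : BddBelow (Set.range c) := ⟨0, by rintro _ ⟨n, rfl⟩; exact hc0 n⟩
    have htend : Tendsto c atTop (𝓝 (⨅ n, c n)) := tendsto_atTop_ciInf hanti hbd
    have hγ0 : 0 ≤ ⨅ n, c n := le_ciInf hc0
    have hγ : (⨅ n, c n) = 0 := by
      by_contra h
      have hγpos : 0 < ⨅ n, c n := lt_of_le_of_ne hγ0 (Ne.symm h)
      have hφγ : φ (⨅ n, c n) < ⨅ n, c n := hlt _ hγpos
      have hev : ∀ᶠ t in 𝓝[Set.Ici (0:ℝ)] (⨅ n, c n), φ t < ⨅ n, c n :=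
        husc _ (Set.mem_Ici.mpr hγ0) _ hφγ
      have htend' : Tendsto c atTop (𝓝[Set.Ici (0:ℝ)] (⨅ n, c n)) :=
        tendsto_nhdsWithin_of_tendsto_nhds_of_eventually_within _ htend
          (Filter.Eventually.of_forall hc0)
      obtain ⟨n, hn⟩ := (htend'.eventually hev).exists
      exact absurd (le_trans (ciInf_le hbd (n + 1)) (hcs n)) (not_le.mpr hn)
    rw [hγ] at htend
    -- find δ > 0 with φ t < 1 for t ∈ [0, 1 + δ]
    have h1 : φ 1 < 1 := hlt 1 one_pos
    have hev1 : ∀ᶠ t in 𝓝[Set.Ici (0:ℝ)] 1, φ t < 1 := husc 1 (Set.mem_Ici.mpr zero_le_one) 1 h1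
    have hnw : 𝓝[Set.Ici (0:ℝ)] (1:ℝ) = 𝓝 1 :=
      nhdsWithin_eq_nhds.mpr (Ici_mem_nhds one_pos)
    rw [hnw] at hev1
    obtain ⟨δ, hδpos, hδ⟩ := Metric.eventually_nhds_iff.mp hev1
    set δ' : ℝ := δ / 2 with hδ'
    have hδ'pos : 0 < δ' := by positivity
    have hφ1δ : φ (1 + δ') < 1 := by
      apply hδ
      rw [Real.dist_eq]
      simp only [add_sub_cancel_left]
      rw [abs_of_pos hδ'pos]
      exact half_lt_self hδpos
    have hφbound : ∀ t, 0 ≤ t → t ≤ 1 + δ' → φ t < 1 := by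
      intro t ht htle
      exact lt_of_le_of_lt (hmono (Set.mem_Ici.mpr ht) (Set.mem_Ici.mpr (by positivity)) htle) hφ1δ
    -- find N with c N ≤ δ'
    obtain ⟨N, hN⟩ := (htend.eventually (eventually_le_nhds hδ'pos)).exists
    -- tail of the orbit stays in closedBall (u N) (1 + δ')
    have htail : ∀ n, N ≤ n → dist (u N) (u n) ≤ 1 + δ' := by
      intro n hn
      induction n, hn using Nat.le_induction with
      | base => simp; positivity
      | succ n hn ih =>
        calc dist (u N) (u (n + 1)) ≤ dist (u N) (u (N + 1)) + dist (u (N + 1)) (u (n + 1)) :=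
              dist_triangle _ _ _
          _ ≤ δ' + φ (dist (u N) (u n)) := by
              apply add_le_add hN
              rw [hstep, hstep]
              exact hT _ _
          _ ≤ δ' + 1 := add_le_add le_rfl (hφbound _ dist_nonneg ih).le
          _ ≤ 1 + δ' := by linarith
    have hsub : Set.range u ⊆ (u '' Set.Iic N) ∪ Metric.closedBall (u N) (1 + δ') := by
      rintro _ ⟨n, rfl⟩
      rcases le_or_gt n N with h | h
      · exact Or.inl ⟨n, h, rfl⟩
      · exact Or.inr (Metric.mem_closedBall.mpr (by rw [dist_comm]; exact htail n h.le))
    exact Bornology.IsBounded.subset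
      ((((Set.finite_Iic N).image u).isBounded).union Metric.isBounded_closedBall) hsub
  refine ⟨key, key, ?_⟩
  intro x y
  have hxmem : x ∈ dorbitOf T x y := Or.inl ⟨0, rfl⟩
  have hymem : y ∈ dorbitOf T x y := Or.inr ⟨0, rfl⟩
  have hbdd : Bornology.IsBounded (dorbitOf T x y) := (key x).union (key y)
  have hdle : dist x y ≤ Metric.diam (dorbitOf T x y) :=
    Metric.dist_le_diam_of_mem hbdd hxmem hymem
  exact (hT x y).trans (hmono (Set.mem_Ici.mpr dist_nonneg) (Set.mem_Ici.mpr (dist_nonneg.trans hdle)) hdle)
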